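/- If a polynomial Q on ℝ^n satisfies the d-hypoellipticity estimate (there exists C > 0 with |ξ|^{|β|/d} |Q^{(β)}(ξ)| ≤ C(1 + |Q(ξ)|) for all multi-indices β and all ξ ∈ ℝ^n), then for every positive integer μ, the polynomial Q^μ also satisfies the d-hypoellipticity estimate (with a possibly different constant). -/

import Mathlib

set_option linter.deprecated false
set_option linter.unusedVariables false

open MvPolynomial Finsupp

open MvPolynomial Finsupp

lemma coeff_pderiv' {n : ℕ} (i : Fin n) (p : MvPolynomial (Fin n) ℂ) (s : Fin n →₀ ℕ) :
    coeff s (pderiv i p) = ((s i : ℂ) + 1) * coeff (s + Finsupp.single i 1) p := by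
  induction p using MvPolynomial.induction_on' with
  | add p q hp hq => simp [hp, hq, mul_add]
  | monomial t a =>
    classical
    rw [pderiv_monomial, coeff_monomial, coeff_monomial]
    by_cases h : t = s + Finsupp.single i 1
    · subst h
      rw [if_pos (add_tsub_cancel_right _ _), if_pos rfl]
      simp only [Finsupp.add_apply, Finsupp.single_apply, if_pos rfl, if_true]
      push_cast
      ring
    · rw [if_neg h]
      by_cases h2 : t - Finsupp.single i 1 = s
      · by_cases h3 : Finsupp.single i 1 ≤ t
        · exact absurd (by rw [← h2, tsub_add_cancel_of_le h3]) h
        · have : t i = 0 := by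
            by_contra h4
            exact h3 (Finsupp.single_le_iff.mpr (Nat.one_le_iff_ne_zero.mpr h4))
          simp [if_pos h2, this]
      · simp [if_neg h2]

lemma pderiv_comm' {n : ℕ} (i j : Fin n) (p : MvPolynomial (Fin n) ℂ) :
    pderiv i (pderiv j p) = pderiv j (pderiv i p) := by
  ext s
  simp only [coeff_pderiv']
  by_cases h : i = j
  · subst h; ring
  · rw [Finsupp.add_apply, Finsupp.add_apply, Finsupp.single_apply, Finsupp.single_apply,
      if_neg h, if_neg (Ne.symm h), add_right_comm s (Finsupp.single i 1) (Finsupp.single j 1)]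
    push_cast
    ring

lemma totalDegree_pderiv_le' {n : ℕ} (i : Fin n) (p : MvPolynomial (Fin n) ℂ) (m : ℕ)
    (h : p.totalDegree ≤ m + 1) : (pderiv i p).totalDegree ≤ m := by
  apply Finset.sup_le
  intro s hs
  rw [MvPolynomial.mem_support_iff, coeff_pderiv'] at hs
  have h2 : coeff (s + Finsupp.single i 1) p ≠ 0 := by
    intro h0; rw [h0, mul_zero] at hs; exact hs rfl
  have h3 := (MvPolynomial.le_totalDegree (MvPolynomial.mem_support_iff.mpr h2)).trans h
  rwa [Finsupp.sum_add_index' (fun _ => rfl) (fun _ _ _ => rfl),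
    Finsupp.sum_single_index rfl, Nat.add_le_add_iff_right] at h3

lemma pderiv_eq_zero_of_totalDegree_eq_zero {n : ℕ} (i : Fin n) (p : MvPolynomial (Fin n) ℂ)
    (h : p.totalDegree = 0) : pderiv i p = 0 := by
  ext s
  rw [coeff_pderiv', MvPolynomial.coeff_zero]
  have h2 : coeff (s + Finsupp.single i 1) p = 0 := by
    by_contra h2
    have h3 := (MvPolynomial.le_totalDegree (MvPolynomial.mem_support_iff.mpr h2)).trans h.le
    rw [Finsupp.sum_add_index' (fun _ => rfl) (fun _ _ _ => rfl),
      Finsupp.sum_single_index rfl] at h3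
    omega
  rw [h2, mul_zero]

/-- The iterated partial derivative `∂^α Q` of a multivariate polynomial, for a
multi-index `α`. -/
noncomputable def polyDeriv {n : ℕ} (α : Fin n →₀ ℕ) :
    Module.End ℂ (MvPolynomial (Fin n) ℂ) :=
  ((List.finRange n).map (fun i => (MvPolynomial.pderiv i).toLinearMap ^ (α i))).prod

/-- The `d`-hypoellipticity estimate for a polynomial `Q` on `ℝⁿ`:
`∃ C > 0, ∀ β, ∀ ξ, |ξ|^(|β|/d) * |Q^{(β)}(ξ)| ≤ C * (1 + |Q(ξ)|)`. -/
def HypoellipticEst {n : ℕ} (d : ℝ) (Q : MvPolynomial (Fin n) ℂ) : Prop :=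
  ∃ C > (0 : ℝ), ∀ β : Fin n →₀ ℕ, ∀ ξ : EuclideanSpace ℝ (Fin n),
    ‖ξ‖ ^ (((β.sum fun _ k => k : ℕ) : ℝ) / d) *
        ‖MvPolynomial.eval (fun i => (ξ i : ℂ)) (polyDeriv β Q)‖ ≤
      C * (1 + ‖MvPolynomial.eval (fun i => (ξ i : ℂ)) Q‖)


lemma commute_pderiv {n : ℕ} (i j : Fin n) :
    Commute ((pderiv i).toLinearMap : Module.End ℂ (MvPolynomial (Fin n) ℂ))
      (pderiv j).toLinearMap := by
  apply LinearMap.ext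
  intro p
  exact pderiv_comm' i j p

lemma commute_pderiv_listProd {n : ℕ} (i : Fin n) (β : Fin n →₀ ℕ) (l : List (Fin n)) :
    Commute ((pderiv i).toLinearMap : Module.End ℂ (MvPolynomial (Fin n) ℂ))
      ((l.map fun j => (pderiv j).toLinearMap ^ (β j)).prod) := by
  apply Commute.list_prod_right
  intro x hx
  rw [List.mem_map] at hx
  obtain ⟨j, -, rfl⟩ := hx
  exact (commute_pderiv i j).pow_right _

lemma polyDeriv_zero {n : ℕ} : polyDeriv (0 : Fin n →₀ ℕ) = 1 := by
  unfold polyDeriv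
  simp

lemma listProd_add_single {n : ℕ} (l : List (Fin n)) (β : Fin n →₀ ℕ) (i : Fin n)
    (h : i ∈ l) (hnd : l.Nodup) :
    ((l.map fun j => (pderiv j).toLinearMap ^ ((β + Finsupp.single i 1 : Fin n →₀ ℕ) j)).prod
        : Module.End ℂ (MvPolynomial (Fin n) ℂ))
      = (l.map fun j => (pderiv j).toLinearMap ^ (β j)).prod * (pderiv i).toLinearMap := by
  induction l with
  | nil => simp at h
  | cons a t ih =>
    rw [List.nodup_cons] at hnd
    simp only [List.map_cons, List.prod_cons]
    by_cases hai : a = i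
    · subst hai
      have ht : (t.map fun j => ((pderiv j).toLinearMap : Module.End ℂ (MvPolynomial (Fin n) ℂ))
            ^ ((β + Finsupp.single a 1 : Fin n →₀ ℕ) j)) = t.map fun j => (pderiv j).toLinearMap ^ (β j) := by
        apply List.map_congr_left
        intro j hj
        have hja : j ≠ a := fun e => hnd.1 (e ▸ hj)
        rw [Finsupp.add_apply, Finsupp.single_apply, if_neg (Ne.symm hja), add_zero]
      rw [ht, Finsupp.add_apply, Finsupp.single_apply, if_pos rfl, pow_succ, mul_assoc,
        (commute_pderiv_listProd a β t).eq, ← mul_assoc]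
    · have hit : i ∈ t := by
        rcases List.mem_cons.mp h with h' | h'
        · exact absurd h'.symm hai
        · exact h'
      rw [ih hit hnd.2, Finsupp.add_apply, Finsupp.single_apply, if_neg (Ne.symm hai), add_zero, mul_assoc]

lemma polyDeriv_add_single {n : ℕ} (β : Fin n →₀ ℕ) (i : Fin n) :
    polyDeriv (β + Finsupp.single i 1) = polyDeriv β * (pderiv i).toLinearMap :=
  listProd_add_single (List.finRange n) β i (List.mem_finRange i) (List.nodup_finRange n)

lemma polyDeriv_add_single' {n : ℕ} (β : Fin n →₀ ℕ) (i : Fin n) :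
    polyDeriv (β + Finsupp.single i 1) = (pderiv i).toLinearMap * polyDeriv β := by
  rw [polyDeriv_add_single]
  unfold polyDeriv
  exact ((commute_pderiv_listProd i β (List.finRange n)).eq).symm

lemma finsuppDeg_add {n : ℕ} (a b : Fin n →₀ ℕ) :
    ((a + b).sum fun _ k => k) = (a.sum fun _ k => k) + (b.sum fun _ k => k) :=
  Finsupp.sum_add_index' (fun _ => rfl) (fun _ _ _ => rfl)

lemma finsupp_decomp {n : ℕ} (β : Fin n →₀ ℕ) (m : ℕ)
    (h : (β.sum fun _ k => k) = m + 1) :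
    ∃ (β' : Fin n →₀ ℕ) (i : Fin n), β = β' + Finsupp.single i 1 ∧
      (β'.sum fun _ k => k) = m := by
  have hne : β ≠ 0 := by
    intro h0
    rw [h0, Finsupp.sum_zero_index] at h
    omega
  obtain ⟨i, hi⟩ : ∃ i, β i ≠ 0 := by
    by_contra h0
    push_neg at h0
    exact hne (Finsupp.ext h0)
  refine ⟨β - Finsupp.single i 1, i, ?_, ?_⟩
  · rw [tsub_add_cancel_of_le (Finsupp.single_le_iff.mpr (Nat.one_le_iff_ne_zero.mpr hi))]
  · have hβ : β = (β - Finsupp.single i 1) + Finsupp.single i 1 :=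
      (tsub_add_cancel_of_le (Finsupp.single_le_iff.mpr (Nat.one_le_iff_ne_zero.mpr hi))).symm
    have := finsuppDeg_add (β - Finsupp.single i 1) (Finsupp.single i 1)
    rw [← hβ, h, Finsupp.sum_single_index rfl] at this
    omega

lemma polyDeriv_eq_zero_of_totalDegree_lt {n : ℕ} (m : ℕ) :
    ∀ (β : Fin n →₀ ℕ) (p : MvPolynomial (Fin n) ℂ),
      (β.sum fun _ k => k) = m → p.totalDegree < m → polyDeriv β p = 0 := by
  induction m with
  | zero => intro β p _ h2; omega
  | succ m ih =>
    intro β p h1 h2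
    obtain ⟨β', i, rfl, hβ'⟩ := finsupp_decomp β m h1
    rw [polyDeriv_add_single, Module.End.mul_apply]
    cases Nat.eq_zero_or_pos m with
    | inl hm =>
      subst hm
      rw [show ((pderiv i).toLinearMap : MvPolynomial (Fin n) ℂ →ₗ[ℂ] MvPolynomial (Fin n) ℂ) p
          = pderiv i p from rfl,
        pderiv_eq_zero_of_totalDegree_eq_zero i p (Nat.lt_one_iff.mp h2), map_zero]
    | inr hm =>
      exact ih β' _ hβ'
        (Nat.lt_of_le_of_lt (totalDegree_pderiv_le' i p (m - 1)
          (by omega)) (by omega))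

lemma pderiv_finset_prod {n : ℕ} {ι : Type*} [DecidableEq ι] (i : Fin n) (s : Finset ι)
    (f : ι → MvPolynomial (Fin n) ℂ) :
    pderiv i (∏ j ∈ s, f j) = ∑ j ∈ s, pderiv i (f j) * ∏ k ∈ s.erase j, f k := by
  induction s using Finset.induction_on with
  | empty => simp
  | @insert a s ha ih =>
    rw [Finset.prod_insert ha, pderiv_mul, ih, Finset.sum_insert ha, Finset.erase_insert ha,
      Finset.mul_sum]
    congr 1
    apply Finset.sum_congr rfl
    intro j hj
    have hja : j ≠ a := fun e => ha (e ▸ hj)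
    rw [Finset.erase_insert_of_ne (Ne.symm hja), Finset.prod_insert (fun h => ha (Finset.erase_subset _ _ h))]
    ring

lemma pderiv_toLinearMap_apply {n : ℕ} (i : Fin n) (p : MvPolynomial (Fin n) ℂ) :
    ((pderiv i).toLinearMap : MvPolynomial (Fin n) ℂ →ₗ[ℂ] MvPolynomial (Fin n) ℂ) p
      = pderiv i p := rfl

lemma finsupp_eq_zero_of_deg_eq_zero {n : ℕ} {β : Fin n →₀ ℕ}
    (h : (β.sum fun _ k => k) = 0) : β = 0 := by
  ext i
  by_cases hi : i ∈ β.support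
  · exact absurd (Finset.sum_eq_zero_iff.mp h i hi) (Finsupp.mem_support_iff.mp hi)
  · simpa using Finsupp.notMem_support_iff.mp hi

/-- Generators: products of `μ` derivatives of `Q` whose multi-indices sum to `β`. -/
def genSet {n : ℕ} (Q : MvPolynomial (Fin n) ℂ) (μ : ℕ) (β : Fin n →₀ ℕ) :
    Set (MvPolynomial (Fin n) ℂ) :=
  {P | ∃ γ : Fin μ → (Fin n →₀ ℕ), (∑ j, γ j) = β ∧ P = ∏ j, polyDeriv (γ j) Q}

lemma polyDeriv_pow_mem {n : ℕ} (Q : MvPolynomial (Fin n) ℂ) (μ : ℕ) (m : ℕ) :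
    ∀ β : Fin n →₀ ℕ, (β.sum fun _ k => k) = m →
      polyDeriv β (Q ^ μ) ∈ AddSubmonoid.closure (genSet Q μ β) := by
  induction m with
  | zero =>
    intro β hβ
    have h0 : β = 0 := finsupp_eq_zero_of_deg_eq_zero hβ
    subst h0
    apply AddSubmonoid.subset_closure
    refine ⟨fun _ => 0, by simp, ?_⟩
    rw [polyDeriv_zero]
    simp only [Module.End.one_apply, polyDeriv_zero]
    rw [Finset.prod_const, Finset.card_univ, Fintype.card_fin]
  | succ m ih =>
    intro β hβ
    obtain ⟨β', i, rfl, hβ'⟩ := finsupp_decomp β m hβ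
    rw [polyDeriv_add_single', Module.End.mul_apply]
    have key : ∀ P ∈ AddSubmonoid.closure (genSet Q μ β'),
        ((pderiv i).toLinearMap : MvPolynomial (Fin n) ℂ →ₗ[ℂ] MvPolynomial (Fin n) ℂ) P ∈
          AddSubmonoid.closure (genSet Q μ (β' + Finsupp.single i 1)) := by
      intro P hP
      induction hP using AddSubmonoid.closure_induction with
      | mem x hx =>
        obtain ⟨γ, hγ, rfl⟩ := hx
        rw [pderiv_toLinearMap_apply, pderiv_finset_prod]
        apply AddSubmonoid.sum_mem
        intro j _
        apply AddSubmonoid.subset_closure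
        refine ⟨Function.update γ j (γ j + Finsupp.single i 1), ?_, ?_⟩
        · rw [Finset.sum_update_of_mem (Finset.mem_univ j), Finset.sdiff_singleton_eq_erase,
            ← hγ, ← Finset.add_sum_erase _ γ (Finset.mem_univ j), add_right_comm]
        · rw [← Finset.mul_prod_erase Finset.univ
            (fun k => polyDeriv (Function.update γ j (γ j + Finsupp.single i 1) k) Q)
            (Finset.mem_univ j)]
          simp only [Function.update_self]
          congr 1
          · rw [polyDeriv_add_single', Module.End.mul_apply, pderiv_toLinearMap_apply]
          · apply Finset.prod_congr rfl
            intro k hk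
            rw [Function.update_of_ne (Finset.ne_of_mem_erase hk)]
      | zero => rw [map_zero]; exact AddSubmonoid.zero_mem _
      | add x y _ _ hx hy => rw [map_add]; exact AddSubmonoid.add_mem _ hx hy
    exact key _ (ih β' hβ')

/-- The degree of a multi-index as an additive monoid hom. -/
def degHom {n : ℕ} : (Fin n →₀ ℕ) →+ ℕ where
  toFun β := β.sum fun _ k => k
  map_zero' := Finsupp.sum_zero_index
  map_add' := finsuppDeg_add

lemma bound_of_mem_closure {n : ℕ} (d : ℝ) (hd : 1 ≤ d) (Q : MvPolynomial (Fin n) ℂ)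
    (μ : ℕ) (C : ℝ) (hC : 0 < C)
    (hQ : ∀ β : Fin n →₀ ℕ, ∀ ξ : EuclideanSpace ℝ (Fin n),
      ‖ξ‖ ^ (((β.sum fun _ k => k : ℕ) : ℝ) / d) *
        ‖MvPolynomial.eval (fun i => (ξ i : ℂ)) (polyDeriv β Q)‖ ≤
      C * (1 + ‖MvPolynomial.eval (fun i => (ξ i : ℂ)) Q‖))
    (β : Fin n →₀ ℕ) (P : MvPolynomial (Fin n) ℂ)
    (hP : P ∈ AddSubmonoid.closure (genSet Q μ β)) :
    ∃ K, 0 ≤ K ∧ ∀ ξ : EuclideanSpace ℝ (Fin n),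
      ‖ξ‖ ^ (((β.sum fun _ k => k : ℕ) : ℝ) / d) *
        ‖MvPolynomial.eval (fun i => (ξ i : ℂ)) P‖ ≤
      K * (1 + ‖MvPolynomial.eval (fun i => (ξ i : ℂ)) Q‖) ^ μ := by
  have hd0 : (0 : ℝ) < d := lt_of_lt_of_le one_pos hd
  induction hP using AddSubmonoid.closure_induction with
  | mem P hPgen =>
    obtain ⟨γ, hγ, rfl⟩ := hPgen
    refine ⟨C ^ μ, le_of_lt (pow_pos hC μ), fun ξ => ?_⟩
    set y := ‖MvPolynomial.eval (fun i => (ξ i : ℂ)) Q‖ with hy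
    have hdeg : (((β.sum fun _ k => k : ℕ) : ℝ) / d)
        = ∑ j : Fin μ, (((((γ j).sum fun _ k => k) : ℕ) : ℝ) / d) := by
      have : (β.sum fun _ k => k) = ∑ j : Fin μ, ((γ j).sum fun _ k => k) := by
        rw [← hγ]
        exact map_sum degHom γ Finset.univ
      rw [this]
      push_cast
      rw [Finset.sum_div]
    have hrpow : ‖ξ‖ ^ (((β.sum fun _ k => k : ℕ) : ℝ) / d)
        = ∏ j : Fin μ, ‖ξ‖ ^ (((((γ j).sum fun _ k => k) : ℕ) : ℝ) / d) := by
      rw [hdeg]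
      exact Real.rpow_sum_of_nonneg (norm_nonneg ξ)
        (fun j _ => div_nonneg (Nat.cast_nonneg _) (le_of_lt hd0))
    have heval : ‖MvPolynomial.eval (fun i => (ξ i : ℂ)) (∏ j : Fin μ, polyDeriv (γ j) Q)‖
        = ∏ j : Fin μ, ‖MvPolynomial.eval (fun i => (ξ i : ℂ)) (polyDeriv (γ j) Q)‖ := by
      rw [map_prod, norm_prod]
    rw [hrpow, heval, ← Finset.prod_mul_distrib]
    calc (∏ j : Fin μ, ‖ξ‖ ^ (((((γ j).sum fun _ k => k) : ℕ) : ℝ) / d) *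
            ‖MvPolynomial.eval (fun i => (ξ i : ℂ)) (polyDeriv (γ j) Q)‖)
        ≤ ∏ _j : Fin μ, C * (1 + y) := by
          apply Finset.prod_le_prod
          · intro j _
            exact mul_nonneg (Real.rpow_nonneg (norm_nonneg ξ) _) (norm_nonneg _)
          · intro j _
            exact hQ (γ j) ξ
      _ = C ^ μ * (1 + y) ^ μ := by
          rw [Finset.prod_const, Finset.card_univ, Fintype.card_fin, mul_pow]
  | zero =>
    refine ⟨0, le_refl 0, fun ξ => ?_⟩
    simp
  | add P R _ _ ihP ihR =>
    obtain ⟨K1, hK1, h1⟩ := ihP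
    obtain ⟨K2, hK2, h2⟩ := ihR
    refine ⟨K1 + K2, by positivity, fun ξ => ?_⟩
    calc ‖ξ‖ ^ (((β.sum fun _ k => k : ℕ) : ℝ) / d) *
          ‖MvPolynomial.eval (fun i => (ξ i : ℂ)) (P + R)‖
        ≤ ‖ξ‖ ^ (((β.sum fun _ k => k : ℕ) : ℝ) / d) *
            (‖MvPolynomial.eval (fun i => (ξ i : ℂ)) P‖ +
             ‖MvPolynomial.eval (fun i => (ξ i : ℂ)) R‖) := by
          apply mul_le_mul_of_nonneg_left _ (Real.rpow_nonneg (norm_nonneg ξ) _)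
          rw [map_add]
          exact norm_add_le _ _
      _ ≤ (K1 + K2) * (1 + ‖MvPolynomial.eval (fun i => (ξ i : ℂ)) Q‖) ^ μ := by
          rw [mul_add, add_mul]
          exact add_le_add (h1 ξ) (h2 ξ)

lemma one_add_pow_le {μ : ℕ} {y : ℝ} (hy : 0 ≤ y) :
    (1 + y) ^ μ ≤ 2 ^ μ * (1 + y ^ μ) := by
  have h1 : (1 + y) ^ μ ≤ (2 * max 1 y) ^ μ := by
    apply pow_le_pow_left₀ (by positivity)
    have := le_max_left 1 y
    have := le_max_right 1 y
    linarith
  rw [mul_pow] at h1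
  refine h1.trans ?_
  apply mul_le_mul_of_nonneg_left _ (by positivity)
  rcases le_total y 1 with h | h
  · rw [max_eq_left h, one_pow]
    nlinarith [pow_nonneg hy μ]
  · rw [max_eq_right h]
    nlinarith

lemma finsupp_apply_le_deg {n : ℕ} (β : Fin n →₀ ℕ) (i : Fin n) :
    β i ≤ (β.sum fun _ k => k) := by
  by_cases h : β i = 0
  · simp [h]
  · exact Finset.single_le_sum (f := fun j => β j) (fun _ _ => Nat.zero_le _)
      (Finsupp.mem_support_iff.mpr h)

/-- If a polynomial `Q` satisfies the `d`-hypoellipticity estimate, then for every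
positive integer `μ` the power `Q^μ` also satisfies the `d`-hypoellipticity estimate. -/
theorem hypoellipticEst_pow {n : ℕ} (d : ℝ) (hd : 1 ≤ d) (Q : MvPolynomial (Fin n) ℂ)
    (hQ : HypoellipticEst d Q) (μ : ℕ) (hμ : 1 ≤ μ) :
    HypoellipticEst d (Q ^ μ) := by
  obtain ⟨C, hC, hQb⟩ := hQ
  have key : ∀ β : Fin n →₀ ℕ, ∃ K, 0 ≤ K ∧ ∀ ξ : EuclideanSpace ℝ (Fin n),
      ‖ξ‖ ^ (((β.sum fun _ k => k : ℕ) : ℝ) / d) *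
        ‖MvPolynomial.eval (fun i => (ξ i : ℂ)) (polyDeriv β (Q ^ μ))‖ ≤
      K * (1 + ‖MvPolynomial.eval (fun i => (ξ i : ℂ)) Q‖) ^ μ := fun β =>
    bound_of_mem_closure d hd Q μ C hC hQb β _ (polyDeriv_pow_mem Q μ _ β rfl)
  choose c hc0 hcb using key
  set D := (Q ^ μ).totalDegree with hD
  set S : Finset (Fin n →₀ ℕ) :=
    Finset.Iic (Finsupp.equivFunOnFinite.symm fun _ : Fin n => D) with hS
  set Kmax : ℝ := ∑ β ∈ S, c β with hKmax
  have hKmax0 : 0 ≤ Kmax := Finset.sum_nonneg fun β _ => hc0 β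
  refine ⟨2 ^ μ * Kmax + 1, by positivity, fun β ξ => ?_⟩
  set y := ‖MvPolynomial.eval (fun i => (ξ i : ℂ)) Q‖ with hy
  have hy0 : 0 ≤ y := norm_nonneg _
  have hz : ‖MvPolynomial.eval (fun i => (ξ i : ℂ)) (Q ^ μ)‖ = y ^ μ := by
    rw [map_pow, norm_pow]
  rcases le_or_gt (β.sum fun _ k => k) D with h | h
  · have hβS : β ∈ S := by
      rw [hS, Finset.mem_Iic, Finsupp.le_def]
      intro i
      simpa using (finsupp_apply_le_deg β i).trans h
    have hcK : c β ≤ Kmax := Finset.single_le_sum (fun β _ => hc0 β) hβS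
    calc ‖ξ‖ ^ (((β.sum fun _ k => k : ℕ) : ℝ) / d) *
          ‖MvPolynomial.eval (fun i => (ξ i : ℂ)) (polyDeriv β (Q ^ μ))‖
        ≤ c β * (1 + y) ^ μ := hcb β ξ
      _ ≤ Kmax * (1 + y) ^ μ :=
          mul_le_mul_of_nonneg_right hcK (by positivity)
      _ ≤ Kmax * (2 ^ μ * (1 + y ^ μ)) :=
          mul_le_mul_of_nonneg_left (one_add_pow_le hy0) hKmax0
      _ ≤ (2 ^ μ * Kmax + 1) * (1 + y ^ μ) := by nlinarith [pow_nonneg hy0 μ]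
      _ = (2 ^ μ * Kmax + 1) *
          (1 + ‖MvPolynomial.eval (fun i => (ξ i : ℂ)) (Q ^ μ)‖) := by rw [hz]
  · rw [polyDeriv_eq_zero_of_totalDegree_lt _ β (Q ^ μ) rfl h]
    rw [map_zero, norm_zero, mul_zero]
    have : (0:ℝ) < 1 + ‖MvPolynomial.eval (fun i => (ξ i : ℂ)) (Q ^ μ)‖ := by positivity
    positivity
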